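/- Let $\mu, \mu_1, \mu_2, \dots$ be probability measures on $[0,1] \times [0,1]$ whose projections to both coordinates equal Lebesgue measure. Then the following are equivalent: (a) $\int f\, d\mu_n \to \int f\, d\mu$ for all continuous $f : [0,1]^2 \to \mathbb{R}$; (b) $\mu_n(A \times B) \to \mu(A \times B)$ for all Lebesgue-measurable sets $A, B \subset [0,1]$; (c) $\int f(x)g(y)\, \mu_n(dx\,dy) \to \int f(x)g(y)\, \mu(dx\,dy)$ for all $f, g \in L^2[0,1]$. -/

import Mathlib

open MeasureTheory Filter

namespace JoiningsWeakConvergenceAux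

set_option linter.unusedSectionVars false



noncomputable abbrev Leb : Measure ℝ := volume.restrict (Set.Icc 0 1)
abbrev Ksq : Set (ℝ × ℝ) := (Set.Icc (0:ℝ) 1) ×ˢ (Set.Icc (0:ℝ) 1)

instance : IsProbabilityMeasure Leb := by
  constructor
  simp [Real.volume_Icc]

variable {ν : Measure (ℝ × ℝ)} [IsProbabilityMeasure ν]

lemma null_compl (hν1 : ν.map Prod.fst = Leb) (hν2 : ν.map Prod.snd = Leb) :
    ν (Ksqᶜ) = 0 := by
  have h1 : ν (Prod.fst ⁻¹' (Set.Icc (0:ℝ) 1)ᶜ) = 0 := by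
    rw [← Measure.map_apply measurable_fst measurableSet_Icc.compl, hν1,
      Measure.restrict_apply measurableSet_Icc.compl]
    simp
  have h2 : ν (Prod.snd ⁻¹' (Set.Icc (0:ℝ) 1)ᶜ) = 0 := by
    rw [← Measure.map_apply measurable_snd measurableSet_Icc.compl, hν2,
      Measure.restrict_apply measurableSet_Icc.compl]
    simp
  have hsub : Ksqᶜ ⊆ (Prod.fst ⁻¹' (Set.Icc (0:ℝ) 1)ᶜ) ∪ (Prod.snd ⁻¹' (Set.Icc (0:ℝ) 1)ᶜ) := by
    intro p hp
    simp only [Ksq, Set.mem_compl_iff, Set.mem_prod, not_and_or] at hp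
    simpa [Set.mem_union] using hp
  exact le_antisymm (le_trans (measure_mono hsub) (le_of_eq (measure_union_null h1 h2)))
    zero_le

lemma ae_mem_K (hν1 : ν.map Prod.fst = Leb) (hν2 : ν.map Prod.snd = Leb) :
    ∀ᵐ p ∂ν, p ∈ Ksq :=
  by
  have := null_compl hν1 hν2
  rw [ae_iff]
  rw [show {p : ℝ × ℝ | ¬p ∈ Ksq} = Ksqᶜ from rfl]
  exact this

lemma rpow_two_eq (w : ℝ → ℝ) : (fun x => |w x| ^ (2:ℝ)) = fun x => |w x| * |w x| :=
  funext fun x => by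
    rw [show (2:ℝ) = ((2:ℕ):ℝ) by norm_num, Real.rpow_natCast]; ring

lemma memLp_fst (hν1 : ν.map Prod.fst = Leb) {h : ℝ → ℝ} (hh : MemLp h 2 Leb) :
    MemLp (fun p : ℝ × ℝ => h p.1) 2 ν := by
  have hm : AEStronglyMeasurable h (ν.map Prod.fst) := hν1 ▸ hh.1
  refine ⟨hm.comp_aemeasurable measurable_fst.aemeasurable, ?_⟩
  have h2 := eLpNorm_map_measure (p := 2) hm measurable_fst.aemeasurable
  rw [hν1] at h2
  rw [show (fun p : ℝ × ℝ => h p.1) = h ∘ Prod.fst from rfl, ← h2]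
  exact hh.2

lemma memLp_snd (hν2 : ν.map Prod.snd = Leb) {h : ℝ → ℝ} (hh : MemLp h 2 Leb) :
    MemLp (fun p : ℝ × ℝ => h p.2) 2 ν := by
  have hm : AEStronglyMeasurable h (ν.map Prod.snd) := hν2 ▸ hh.1
  refine ⟨hm.comp_aemeasurable measurable_snd.aemeasurable, ?_⟩
  have h2 := eLpNorm_map_measure (p := 2) hm measurable_snd.aemeasurable
  rw [hν2] at h2
  rw [show (fun p : ℝ × ℝ => h p.2) = h ∘ Prod.snd from rfl, ← h2]
  exact hh.2

lemma integrable_mul2 {u v : ℝ × ℝ → ℝ} (hu : MemLp u 2 ν) (hv : MemLp v 2 ν) :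
    Integrable (fun p => u p * v p) ν := by
  have h1 : (1:ENNReal)/1 = 1/2 + 1/2 := by
    rw [ENNReal.div_add_div_same, one_add_one_eq_two, ENNReal.div_self (by norm_num) (by norm_num),
      ENNReal.div_self (by norm_num) (by norm_num)]
  have : MemLp (u • v) 1 ν := MemLp.smul (r := 1) hv hu
  exact memLp_one_iff_integrable.mp this

lemma sq_int_fst (hν1 : ν.map Prod.fst = Leb) {h : ℝ → ℝ} (hh : MemLp h 2 Leb) :
    ∫ p, |h p.1| ^ (2:ℝ) ∂ν = ∫ x, |h x| ^ (2:ℝ) ∂Leb := by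
  have hm : AEStronglyMeasurable (fun x => |h x| ^ (2:ℝ)) (ν.map Prod.fst) := by
    rw [hν1, rpow_two_eq h]
    exact ((hh.1.aemeasurable.norm.mul hh.1.aemeasurable.norm).congr (by filter_upwards with x using by simp [Real.norm_eq_abs])).aestronglyMeasurable
  rw [← hν1, integral_map measurable_fst.aemeasurable hm]

lemma sq_int_snd (hν2 : ν.map Prod.snd = Leb) {h : ℝ → ℝ} (hh : MemLp h 2 Leb) :
    ∫ p, |h p.2| ^ (2:ℝ) ∂ν = ∫ x, |h x| ^ (2:ℝ) ∂Leb := by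
  have hm : AEStronglyMeasurable (fun x => |h x| ^ (2:ℝ)) (ν.map Prod.snd) := by
    rw [hν2, rpow_two_eq h]
    exact ((hh.1.aemeasurable.norm.mul hh.1.aemeasurable.norm).congr (by filter_upwards with x using by simp [Real.norm_eq_abs])).aestronglyMeasurable
  rw [← hν2, integral_map measurable_snd.aemeasurable hm]

lemma cauchy_schwarz {u v : ℝ × ℝ → ℝ} (hu : MemLp u 2 ν) (hv : MemLp v 2 ν) :
    |∫ p, u p * v p ∂ν| ≤
      (∫ p, |u p| ^ (2:ℝ) ∂ν) ^ ((1:ℝ)/2) * (∫ p, |v p| ^ (2:ℝ) ∂ν) ^ ((1:ℝ)/2) := by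
  have h2 : ENNReal.ofReal (2:ℝ) = 2 := by norm_num
  have hpq : (2:ℝ).HolderConjugate 2 := Real.HolderConjugate.two_two
  have key := integral_mul_norm_le_Lp_mul_Lq (μ := ν) hpq (h2 ▸ hu) (h2 ▸ hv)
  calc |∫ p, u p * v p ∂ν| ≤ ∫ p, ‖u p‖ * ‖v p‖ ∂ν := by
        simpa [Real.norm_eq_abs, abs_mul] using
          norm_integral_le_integral_norm (μ := ν) (fun p => u p * v p)
    _ ≤ _ := by simpa [Real.norm_eq_abs] using key

/- grid -/
noncomputable def gIdx (N : ℕ) (x : ℝ) : ℕ := min N ⌊x * (N+1)⌋₊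
noncomputable def gPt (N : ℕ) (i : ℕ) : ℝ := i / (N+1)
def gCell (N : ℕ) (i : ℕ) : Set ℝ := {x ∈ Set.Icc (0:ℝ) 1 | gIdx N x = i}

lemma gCell_subset {N i : ℕ} : gCell N i ⊆ Set.Icc (0:ℝ) 1 := fun _ hx => hx.1

lemma gIdx_measurable (N : ℕ) : Measurable (gIdx N) :=
  measurable_const.min (Nat.measurable_floor.comp (measurable_id.mul_const _))

lemma gCell_measurable {N i : ℕ} : MeasurableSet (gCell N i) :=
  measurableSet_Icc.inter ((gIdx_measurable N) (measurableSet_singleton i))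

lemma gIdx_le {N : ℕ} (x : ℝ) : gIdx N x ≤ N := min_le_left _ _

lemma gPt_mem {N i : ℕ} (hi : i ≤ N) : gPt N i ∈ Set.Icc (0:ℝ) 1 := by
  constructor
  · rw [gPt]; positivity
  · rw [gPt, div_le_one (by positivity)]
    have : (i:ℝ) ≤ N := Nat.cast_le.mpr hi
    linarith

lemma gPt_le {N : ℕ} {x : ℝ} (hx : x ∈ Set.Icc (0:ℝ) 1) : gPt N (gIdx N x) ≤ x := by
  have h0 : (0:ℝ) ≤ x * (N+1) := by
    have := hx.1; positivity
  have h1 : ((gIdx N x : ℝ)) ≤ x * (N+1) := by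
    calc ((gIdx N x : ℝ)) ≤ (⌊x * (N+1)⌋₊ : ℝ) := Nat.cast_le.mpr (min_le_right _ _)
      _ ≤ x * (N+1) := Nat.floor_le h0
  rw [gPt, div_le_iff₀ (by positivity)]
  linarith

lemma le_gPt_add {N : ℕ} {x : ℝ} (hx : x ∈ Set.Icc (0:ℝ) 1) :
    x ≤ gPt N (gIdx N x) + 1/(N+1) := by
  rcases le_or_gt (⌊x * (N+1)⌋₊) N with h | h
  · have hidx : gIdx N x = ⌊x * (N+1)⌋₊ := min_eq_right h
    have h2 : x * (N+1) < ⌊x * (N+1)⌋₊ + 1 := Nat.lt_floor_add_one _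
    rw [hidx, gPt, ← add_div, le_div_iff₀ (by positivity : (0:ℝ) < (N:ℝ)+1)]
    linarith
  · have hidx : gIdx N x = N := min_eq_left h.le
    rw [hidx, gPt, ← add_div]
    have h3 : ((N:ℝ) + 1)/((N:ℝ)+1) = 1 := div_self (by positivity)
    rw [h3]
    exact hx.2


lemma dist_gPt {N : ℕ} {x : ℝ} (hx : x ∈ Set.Icc (0:ℝ) 1) :
    dist x (gPt N (gIdx N x)) ≤ 1/(N+1) := by
  rw [Real.dist_eq, abs_le]
  have h1 := gPt_le (N := N) hx
  have h2 := le_gPt_add (N := N) hx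
  have h3 : (0:ℝ) ≤ 1/(N+1) := by positivity
  constructor <;> linarith

/-- the collection of grid rectangle indices -/
def gF (N : ℕ) : Finset (ℕ × ℕ) := Finset.range (N+1) ×ˢ Finset.range (N+1)

noncomputable def stepFn (N : ℕ) (f : ℝ × ℝ → ℝ) : ℝ × ℝ → ℝ := fun p =>
  ∑ q ∈ gF N, Set.indicator (gCell N q.1 ×ˢ gCell N q.2)
    (fun _ => f (gPt N q.1, gPt N q.2)) p

lemma stepFn_eq {N : ℕ} {f : ℝ × ℝ → ℝ} {p : ℝ × ℝ} (hp : p ∈ Ksq) :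
    stepFn N f p = f (gPt N (gIdx N p.1), gPt N (gIdx N p.2)) := by
  simp only [stepFn]
  have hmem : (gIdx N p.1, gIdx N p.2) ∈ gF N := by
    simp only [gF, Finset.mem_product, Finset.mem_range]
    exact ⟨Nat.lt_succ_of_le (gIdx_le _), Nat.lt_succ_of_le (gIdx_le _)⟩
  rw [Finset.sum_eq_single_of_mem _ hmem]
  · have h1 : p.1 ∈ gCell N (gIdx N p.1) := Set.mem_sep hp.1 rfl
    have h2 : p.2 ∈ gCell N (gIdx N p.2) := Set.mem_sep hp.2 rfl
    rw [Set.indicator_of_mem (Set.mem_prod.mpr ⟨h1, h2⟩)]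
  · intro q _ hq
    apply Set.indicator_of_notMem
    intro hmem2
    rw [Set.mem_prod] at hmem2
    exact hq (Prod.ext hmem2.1.2.symm hmem2.2.2.symm)

lemma integrable_stepFn {N : ℕ} {f : ℝ × ℝ → ℝ} (ν : Measure (ℝ × ℝ))
    [IsFiniteMeasure ν] : Integrable (stepFn N f) ν := by
  apply integrable_finset_sum
  intro q _
  exact (integrable_const _).indicator (gCell_measurable.prod gCell_measurable)

lemma integral_stepFn {N : ℕ} {f : ℝ × ℝ → ℝ} (ν : Measure (ℝ × ℝ)) [IsFiniteMeasure ν] :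
    ∫ p, stepFn N f p ∂ν = ∑ q ∈ gF N,
      f (gPt N q.1, gPt N q.2) * (ν (gCell N q.1 ×ˢ gCell N q.2)).toReal := by
  simp only [stepFn]
  rw [integral_finset_sum _ (fun q _ =>
    (integrable_const _).indicator (gCell_measurable.prod gCell_measurable))]
  refine Finset.sum_congr rfl fun q _ => ?_
  rw [integral_indicator_const _ (gCell_measurable.prod gCell_measurable)]
  rw [smul_eq_mul, mul_comm]
  rfl


/- continuous functions on the square -/

lemma integrable_contOn (hν1 : ν.map Prod.fst = Leb) (hν2 : ν.map Prod.snd = Leb)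
    {f : ℝ × ℝ → ℝ} (hf : ContinuousOn f Ksq) : Integrable f ν := by
  have hK : MeasurableSet Ksq := measurableSet_Icc.prod measurableSet_Icc
  have hres : ν.restrict Ksq = ν :=
    Measure.restrict_eq_self_of_ae_mem (ae_mem_K hν1 hν2)
  have hsm : AEStronglyMeasurable f ν := by
    have := hf.aestronglyMeasurable hK (μ := ν)
    rwa [hres] at this
  obtain ⟨C, hC⟩ := (isCompact_Icc.prod isCompact_Icc).exists_bound_of_continuousOn hf
  exact (integrable_const C).mono' hsm
    (by filter_upwards [ae_mem_K hν1 hν2] with p hp using hC p hp)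

lemma step_approx (hν1 : ν.map Prod.fst = Leb) (hν2 : ν.map Prod.snd = Leb)
    {f : ℝ × ℝ → ℝ} (hf : ContinuousOn f Ksq) {ε δ : ℝ}
    (hUC : ∀ x ∈ Ksq, ∀ y ∈ Ksq, dist x y ≤ δ → dist (f x) (f y) ≤ ε) {N : ℕ}
    (hN : 1/((N:ℝ)+1) ≤ δ) :
    |∫ p, f p ∂ν - ∑ q ∈ gF N,
        f (gPt N q.1, gPt N q.2) * (ν (gCell N q.1 ×ˢ gCell N q.2)).toReal| ≤ ε := by
  rw [← integral_stepFn (f := f) ν,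
    ← integral_sub (integrable_contOn hν1 hν2 hf) (integrable_stepFn ν)]
  have hb : ∀ᵐ p ∂ν, ‖f p - stepFn N f p‖ ≤ ε := by
    filter_upwards [ae_mem_K hν1 hν2] with p hp
    rw [stepFn_eq hp, Real.norm_eq_abs, ← Real.dist_eq]
    have hgm : ((gPt N (gIdx N p.1), gPt N (gIdx N p.2)) : ℝ × ℝ) ∈ Ksq :=
      ⟨gPt_mem (gIdx_le _), gPt_mem (gIdx_le _)⟩
    apply hUC p hp _ hgm
    rw [Prod.dist_eq]
    exact max_le ((dist_gPt hp.1).trans hN) ((dist_gPt hp.2).trans hN)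
  calc |∫ p, (f p - stepFn N f p) ∂ν|
      ≤ ε * (ν Set.univ).toReal := by
        have := norm_integral_le_of_norm_le_const (μ := ν) hb
        rwa [Real.norm_eq_abs] at this
    _ = ε := by simp

/- a generic approximation-to-tendsto helper -/
lemma tendsto_of_approx {x : ℕ → ℝ} {L : ℝ}
    (h : ∀ ε : ℝ, 0 < ε → ∃ (a : ℕ → ℝ) (l : ℝ), Tendsto a atTop (nhds l) ∧
      (∀ n, |x n - a n| ≤ ε) ∧ |L - l| ≤ ε) :
    Tendsto x atTop (nhds L) := by
  rw [Metric.tendsto_atTop]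
  intro ε hε
  obtain ⟨a, l, hal, hxa, hLl⟩ := h (ε/4) (by linarith)
  obtain ⟨M, hM⟩ := Metric.tendsto_atTop.mp hal (ε/4) (by linarith)
  refine ⟨M, fun n hn => ?_⟩
  have h1 := hxa n
  have h2 := hM n hn
  rw [Real.dist_eq] at h2 ⊢
  have h3 : |x n - L| ≤ |x n - a n| + |a n - l| + |l - L| := by
    calc |x n - L| ≤ |x n - a n| + |a n - L| := abs_sub_le _ _ _
      _ ≤ |x n - a n| + (|a n - l| + |l - L|) := by
          have := abs_sub_le (a n) l L
          linarith
      _ = _ := by ring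
  have h4 : |l - L| = |L - l| := abs_sub_comm _ _
  rw [h4] at h3
  linarith

/- indicators -/

lemma memLp_indicator {A : Set ℝ} (hA : MeasurableSet A) :
    MemLp (A.indicator fun _ => (1:ℝ)) 2 Leb := by
  refine MemLp.of_bound ((measurable_const.indicator hA).aestronglyMeasurable) 1 ?_
  filter_upwards with x
  by_cases h : x ∈ A <;> simp [Set.indicator_apply, h]

lemma integral_indicator_prod (hν1 : ν.map Prod.fst = Leb) (hν2 : ν.map Prod.snd = Leb)
    {A B : Set ℝ} (hA : MeasurableSet A) (hB : MeasurableSet B) :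
    ∫ p : ℝ × ℝ, A.indicator (fun _ => (1:ℝ)) p.1 * B.indicator (fun _ => (1:ℝ)) p.2 ∂ν
      = (ν (A ×ˢ B)).toReal := by
  have heq : (fun p : ℝ × ℝ => A.indicator (fun _ => (1:ℝ)) p.1 *
      B.indicator (fun _ => (1:ℝ)) p.2) = (A ×ˢ B).indicator (fun _ => (1:ℝ)) := by
    funext p
    by_cases h1 : p.1 ∈ A <;> by_cases h2 : p.2 ∈ B <;>
      simp [Set.indicator_apply, h1, h2, Set.mem_prod]
  rw [heq, integral_indicator_const _ (hA.prod hB), smul_eq_mul, mul_one]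
  rfl

lemma measure_prod_congr (hν1 : ν.map Prod.fst = Leb) (hν2 : ν.map Prod.snd = Leb)
    {A A' B B' : Set ℝ} (hA : A =ᵐ[volume] A') (hB : B =ᵐ[volume] B') :
    ν (A ×ˢ B) = ν (A' ×ˢ B') := by
  have nullT : ∀ {S S' : Set ℝ}, S =ᵐ[volume] S' →
      volume (toMeasurable volume ((S \ S') ∪ (S' \ S))) = 0 := by
    intro S S' hSS
    rw [measure_toMeasurable]
    exact measure_union_null (ae_eq_set.mp hSS).1 (ae_eq_set.mp hSS).2
  have h1 : ν (Prod.fst ⁻¹' (toMeasurable volume ((A \ A') ∪ (A' \ A)))) = 0 := by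
    rw [← Measure.map_apply measurable_fst (measurableSet_toMeasurable _ _), hν1,
      Measure.restrict_apply (measurableSet_toMeasurable _ _)]
    exact measure_mono_null Set.inter_subset_left (nullT hA)
  have h2 : ν (Prod.snd ⁻¹' (toMeasurable volume ((B \ B') ∪ (B' \ B)))) = 0 := by
    rw [← Measure.map_apply measurable_snd (measurableSet_toMeasurable _ _), hν2,
      Measure.restrict_apply (measurableSet_toMeasurable _ _)]
    exact measure_mono_null Set.inter_subset_left (nullT hB)
  apply measure_congr
  have ha1 : ∀ᵐ p : ℝ × ℝ ∂ν, p.1 ∉ toMeasurable volume ((A \ A') ∪ (A' \ A)) := by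
    rw [ae_iff]; simp only [not_not]; exact h1
  have ha2 : ∀ᵐ p : ℝ × ℝ ∂ν, p.2 ∉ toMeasurable volume ((B \ B') ∪ (B' \ B)) := by
    rw [ae_iff]; simp only [not_not]; exact h2
  filter_upwards [ha1, ha2] with p hp1 hp2
  have hAiff : p.1 ∈ A ↔ p.1 ∈ A' := by
    constructor
    · intro h; by_contra hc
      exact hp1 (subset_toMeasurable _ _ (Or.inl ⟨h, hc⟩))
    · intro h; by_contra hc
      exact hp1 (subset_toMeasurable _ _ (Or.inr ⟨h, hc⟩))
  have hBiff : p.2 ∈ B ↔ p.2 ∈ B' := by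
    constructor
    · intro h; by_contra hc
      exact hp2 (subset_toMeasurable _ _ (Or.inl ⟨h, hc⟩))
    · intro h; by_contra hc
      exact hp2 (subset_toMeasurable _ _ (Or.inr ⟨h, hc⟩))
  show (p ∈ A ×ˢ B) = (p ∈ A' ×ˢ B')
  simp only [Set.mem_prod]
  rw [eq_iff_iff]
  exact and_congr hAiff hBiff

/- the key quantitative bound for (a) → (c) -/
lemma L2_approx_bound (hν1 : ν.map Prod.fst = Leb) (hν2 : ν.map Prod.snd = Leb)
    {f g f' g' : ℝ → ℝ} (hf : MemLp f 2 Leb) (hg : MemLp g 2 Leb)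
    (hf' : MemLp f' 2 Leb) (hg' : MemLp g' 2 Leb) :
    |∫ p, f p.1 * g p.2 ∂ν - ∫ p, f' p.1 * g' p.2 ∂ν| ≤
      (∫ x, |f x - f' x| ^ (2:ℝ) ∂Leb) ^ ((1:ℝ)/2) * (∫ x, |g x| ^ (2:ℝ) ∂Leb) ^ ((1:ℝ)/2)
      + (∫ x, |f' x| ^ (2:ℝ) ∂Leb) ^ ((1:ℝ)/2) *
        (∫ x, |g x - g' x| ^ (2:ℝ) ∂Leb) ^ ((1:ℝ)/2) := by
  have hd1 : MemLp (fun x => f x - f' x) 2 Leb := hf.sub hf'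
  have hd2 : MemLp (fun x => g x - g' x) 2 Leb := hg.sub hg'
  have int3 : Integrable (fun p : ℝ × ℝ => (f p.1 - f' p.1) * g p.2) ν :=
    integrable_mul2 (memLp_fst hν1 hd1) (memLp_snd hν2 hg)
  have int4 : Integrable (fun p : ℝ × ℝ => f' p.1 * (g p.2 - g' p.2)) ν :=
    integrable_mul2 (memLp_fst hν1 hf') (memLp_snd hν2 hd2)
  have int1 : Integrable (fun p : ℝ × ℝ => f p.1 * g p.2) ν :=
    integrable_mul2 (memLp_fst hν1 hf) (memLp_snd hν2 hg)
  have int2 : Integrable (fun p : ℝ × ℝ => f' p.1 * g' p.2) ν :=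
    integrable_mul2 (memLp_fst hν1 hf') (memLp_snd hν2 hg')
  have hsplit : ∫ p, f p.1 * g p.2 ∂ν - ∫ p, f' p.1 * g' p.2 ∂ν =
      (∫ p, (f p.1 - f' p.1) * g p.2 ∂ν) + (∫ p, f' p.1 * (g p.2 - g' p.2) ∂ν) := by
    rw [← integral_sub int1 int2, ← integral_add int3 int4]
    exact integral_congr_ae (Eventually.of_forall fun p => by ring)
  rw [hsplit]
  have cs1 := cauchy_schwarz (memLp_fst hν1 hd1) (memLp_snd hν2 hg)
  have cs2 := cauchy_schwarz (memLp_fst hν1 hf') (memLp_snd hν2 hd2)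
  rw [sq_int_fst hν1 hd1, sq_int_snd hν2 hg] at cs1
  rw [sq_int_fst hν1 hf', sq_int_snd hν2 hd2] at cs2
  calc |(∫ p, (f p.1 - f' p.1) * g p.2 ∂ν) + (∫ p, f' p.1 * (g p.2 - g' p.2) ∂ν)|
      ≤ |∫ p, (f p.1 - f' p.1) * g p.2 ∂ν| + |∫ p, f' p.1 * (g p.2 - g' p.2) ∂ν| :=
        abs_add_le _ _
    _ ≤ _ := add_le_add cs1 cs2

lemma rpow_half_le {h : ℝ → ℝ} {η : ℝ} (hη : 0 ≤ η)
    (hint : ∫ x, |h x| ^ (2:ℝ) ∂Leb ≤ η ^ (2:ℝ)) :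
    (∫ x, |h x| ^ (2:ℝ) ∂Leb) ^ ((1:ℝ)/2) ≤ η := by
  have h0 : 0 ≤ ∫ x, |h x| ^ (2:ℝ) ∂Leb :=
    integral_nonneg fun x => Real.rpow_nonneg (abs_nonneg _) _
  calc (∫ x, |h x| ^ (2:ℝ) ∂Leb) ^ ((1:ℝ)/2) ≤ (η ^ (2:ℝ)) ^ ((1:ℝ)/2) :=
        Real.rpow_le_rpow h0 hint (by norm_num)
    _ = η := by
        rw [← Real.rpow_mul hη]
        norm_num

end JoiningsWeakConvergenceAux

open JoiningsWeakConvergenceAux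

/-- For probability measures `μ, μ₁, μ₂, …` on `[0,1]²` with both marginals
equal to Lebesgue measure, the following are equivalent:
(a) `∫ f dμₙ → ∫ f dμ` for all continuous `f` on the square;
(b) `μₙ(A × B) → μ(A × B)` for all Lebesgue-measurable `A, B ⊆ [0,1]`;
(c) `∫ f(x)g(y) μₙ(dx dy) → ∫ f(x)g(y) μ(dx dy)` for all `f, g ∈ L²[0,1]`. -/
theorem joinings_weak_convergence_tfae
    (μ : Measure (ℝ × ℝ)) (μs : ℕ → Measure (ℝ × ℝ))
    [IsProbabilityMeasure μ] [∀ n, IsProbabilityMeasure (μs n)]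
    (hμ1 : μ.map Prod.fst = volume.restrict (Set.Icc 0 1))
    (hμ2 : μ.map Prod.snd = volume.restrict (Set.Icc 0 1))
    (hμs1 : ∀ n, (μs n).map Prod.fst = volume.restrict (Set.Icc 0 1))
    (hμs2 : ∀ n, (μs n).map Prod.snd = volume.restrict (Set.Icc 0 1)) :
    List.TFAE
      [ (∀ f : ℝ × ℝ → ℝ, ContinuousOn f (Set.Icc 0 1 ×ˢ Set.Icc 0 1) →
          Tendsto (fun n => ∫ p, f p ∂(μs n)) atTop (nhds (∫ p, f p ∂μ))),
        (∀ A B : Set ℝ, A ⊆ Set.Icc 0 1 → B ⊆ Set.Icc 0 1 →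
          NullMeasurableSet A volume → NullMeasurableSet B volume →
          Tendsto (fun n => ((μs n) (A ×ˢ B)).toReal) atTop
            (nhds ((μ (A ×ˢ B)).toReal))),
        (∀ f g : ℝ → ℝ,
          MemLp f 2 (volume.restrict (Set.Icc 0 1)) →
          MemLp g 2 (volume.restrict (Set.Icc 0 1)) →
          Tendsto (fun n => ∫ p, f p.1 * g p.2 ∂(μs n)) atTop
            (nhds (∫ p, f p.1 * g p.2 ∂μ))) ] := by
  tfae_have 1 → 3
  | hA => by
    intro f g hf hg
    apply tendsto_of_approx
    intro ε hε
    -- approximate f in L² by a bounded continuous function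
    set Bg : ℝ := (∫ x, |g x| ^ (2:ℝ) ∂Leb) ^ ((1:ℝ)/2) with hBgdef
    have hBg0 : 0 ≤ Bg :=
      Real.rpow_nonneg (integral_nonneg fun x => Real.rpow_nonneg (abs_nonneg _) _) _
    have hη1 : (0:ℝ) < ε/(2*(Bg+1)) := by positivity
    have hf2 : MemLp f (ENNReal.ofReal (2:ℝ)) Leb := by
      rw [show ENNReal.ofReal (2:ℝ) = 2 by norm_num]; exact hf
    have hg2 : MemLp g (ENNReal.ofReal (2:ℝ)) Leb := by
      rw [show ENNReal.ofReal (2:ℝ) = 2 by norm_num]; exact hg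
    obtain ⟨f', hf'close, hf'mem⟩ := hf2.exists_boundedContinuous_integral_rpow_sub_le
      two_pos (show (0:ℝ) < (ε/(2*(Bg+1))) ^ (2:ℝ) by positivity)
    have hf'2 : MemLp (⇑f') 2 Leb := by
      rwa [show ENNReal.ofReal (2:ℝ) = 2 by norm_num] at hf'mem
    set Bf' : ℝ := (∫ x, |f' x| ^ (2:ℝ) ∂Leb) ^ ((1:ℝ)/2) with hBf'def
    have hBf'0 : 0 ≤ Bf' :=
      Real.rpow_nonneg (integral_nonneg fun x => Real.rpow_nonneg (abs_nonneg _) _) _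
    have hη2 : (0:ℝ) < ε/(2*(Bf'+1)) := by positivity
    obtain ⟨g', hg'close, hg'mem⟩ := hg2.exists_boundedContinuous_integral_rpow_sub_le
      two_pos (show (0:ℝ) < (ε/(2*(Bf'+1))) ^ (2:ℝ) by positivity)
    have hg'2 : MemLp (⇑g') 2 Leb := by
      rwa [show ENNReal.ofReal (2:ℝ) = 2 by norm_num] at hg'mem
    -- the product function is continuous
    have hFcont : ContinuousOn (fun p : ℝ × ℝ => f' p.1 * g' p.2) Ksq :=
      ((f'.continuous.comp continuous_fst).mul (g'.continuous.comp continuous_snd)).continuousOn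
    -- key bound for any admissible ν
    have key : ∀ (ν : Measure (ℝ × ℝ)), IsProbabilityMeasure ν →
        ν.map Prod.fst = Leb → ν.map Prod.snd = Leb →
        |∫ p, f p.1 * g p.2 ∂ν - ∫ p, f' p.1 * g' p.2 ∂ν| ≤ ε := by
      intro ν hνP hν1 hν2
      haveI := hνP
      have hb := L2_approx_bound hν1 hν2 hf hg hf'2 hg'2
      have e1 : (∫ x, |f x - f' x| ^ (2:ℝ) ∂Leb) ^ ((1:ℝ)/2) ≤ ε/(2*(Bg+1)) := by
        apply rpow_half_le hη1.le
        simpa [Real.norm_eq_abs] using hf'close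
      have e2 : (∫ x, |g x - g' x| ^ (2:ℝ) ∂Leb) ^ ((1:ℝ)/2) ≤ ε/(2*(Bf'+1)) := by
        apply rpow_half_le hη2.le
        simpa [Real.norm_eq_abs] using hg'close
      have t1 : (∫ x, |f x - f' x| ^ (2:ℝ) ∂Leb) ^ ((1:ℝ)/2) * Bg ≤ ε/2 := by
        have hmul : ε/(2*(Bg+1)) * (Bg+1) = ε/2 := by field_simp
        calc (∫ x, |f x - f' x| ^ (2:ℝ) ∂Leb) ^ ((1:ℝ)/2) * Bg
            ≤ ε/(2*(Bg+1)) * (Bg+1) := by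
              apply mul_le_mul e1 (by linarith) hBg0 hη1.le
          _ = ε/2 := hmul
      have t2 : Bf' * (∫ x, |g x - g' x| ^ (2:ℝ) ∂Leb) ^ ((1:ℝ)/2) ≤ ε/2 := by
        have hmul : (Bf'+1) * (ε/(2*(Bf'+1))) = ε/2 := by field_simp
        calc Bf' * (∫ x, |g x - g' x| ^ (2:ℝ) ∂Leb) ^ ((1:ℝ)/2)
            ≤ (Bf'+1) * (ε/(2*(Bf'+1))) := by
              apply mul_le_mul (by linarith) e2
                (Real.rpow_nonneg (integral_nonneg fun x =>
                  Real.rpow_nonneg (abs_nonneg _) _) _) (by linarith)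
          _ = ε/2 := hmul
      calc |∫ p, f p.1 * g p.2 ∂ν - ∫ p, f' p.1 * g' p.2 ∂ν| ≤ _ := hb
        _ ≤ ε/2 + ε/2 := add_le_add t1 t2
        _ = ε := by ring
    refine ⟨fun n => ∫ p, f' p.1 * g' p.2 ∂(μs n), ∫ p, f' p.1 * g' p.2 ∂μ,
      hA _ hFcont, fun n => key (μs n) inferInstance (hμs1 n) (hμs2 n),
      key μ inferInstance hμ1 hμ2⟩
  tfae_have 3 → 2
  | hC => by
    intro A B hAsub hBsub hAm hBm
    have hA'm : MeasurableSet (toMeasurable volume A) := measurableSet_toMeasurable _ _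
    have hB'm : MeasurableSet (toMeasurable volume B) := measurableSet_toMeasurable _ _
    have hA'e : A =ᵐ[volume] toMeasurable volume A := (hAm.toMeasurable_ae_eq).symm
    have hB'e : B =ᵐ[volume] toMeasurable volume B := (hBm.toMeasurable_ae_eq).symm
    have key : ∀ (ν : Measure (ℝ × ℝ)), IsProbabilityMeasure ν →
        ν.map Prod.fst = Leb → ν.map Prod.snd = Leb →
        ∫ p : ℝ × ℝ, (toMeasurable volume A).indicator (fun _ => (1:ℝ)) p.1 *
          (toMeasurable volume B).indicator (fun _ => (1:ℝ)) p.2 ∂ν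
          = (ν (A ×ˢ B)).toReal := by
      intro ν hνP hν1 hν2
      haveI := hνP
      rw [integral_indicator_prod hν1 hν2 hA'm hB'm,
        ← measure_prod_congr hν1 hν2 hA'e hB'e]
    have := hC _ _ (memLp_indicator hA'm) (memLp_indicator hB'm)
    rw [funext fun n => key (μs n) inferInstance (hμs1 n) (hμs2 n),
      key μ inferInstance hμ1 hμ2] at this
    exact this
  tfae_have 2 → 1
  | hB => by
    intro f hf
    apply tendsto_of_approx
    intro ε hε
    obtain ⟨δ, hδ, hUC⟩ := Metric.uniformContinuousOn_iff_le.mp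
      ((isCompact_Icc.prod isCompact_Icc).uniformContinuousOn_of_continuous hf) ε hε
    obtain ⟨N, hN⟩ := exists_nat_one_div_lt (K := ℝ) hδ
    refine ⟨fun n => ∑ q ∈ gF N, f (gPt N q.1, gPt N q.2) *
        ((μs n) (gCell N q.1 ×ˢ gCell N q.2)).toReal,
      ∑ q ∈ gF N, f (gPt N q.1, gPt N q.2) * (μ (gCell N q.1 ×ˢ gCell N q.2)).toReal,
      ?_, ?_, ?_⟩
    · apply tendsto_finset_sum
      intro q _
      exact (hB (gCell N q.1) (gCell N q.2) gCell_subset gCell_subset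
        gCell_measurable.nullMeasurableSet gCell_measurable.nullMeasurableSet).const_mul _
    · intro n
      exact step_approx (hμs1 n) (hμs2 n) hf hUC hN.le
    · exact step_approx hμ1 hμ2 hf hUC hN.le
  tfae_finish
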